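/- For every t ∈ [0,1], ∫₀¹ ∫₀¹ (min(s1,t) − s1 t)(min(s2,t) − s2 t) · [ min(s1, s2, t) + s1 s2 t − s2·min(s1,t) − s1·min(s2,t) ] ds1 ds2 = t³(1−t)²(5 − 10t + 6t²)/45. -/

import Mathlib

open intervalIntegral Set

private lemma integral_quintic (a b c0 c1 c2 c3 c4 c5 : ℝ) :
    (∫ x in a..b, (c0 + c1*x + c2*x^2 + c3*x^3 + c4*x^4 + c5*x^5))
      = (c0*b + c1*b^2/2 + c2*b^3/3 + c3*b^4/4 + c4*b^5/5 + c5*b^6/6)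
      - (c0*a + c1*a^2/2 + c2*a^3/3 + c3*a^4/4 + c4*a^5/5 + c5*a^6/6) := by
  have h : ∀ x ∈ Set.uIcc a b,
      HasDerivAt (fun y : ℝ => c0*y + c1*y^2/2 + c2*y^3/3 + c3*y^4/4 + c4*y^5/5 + c5*y^6/6)
        (c0 + c1*x + c2*x^2 + c3*x^3 + c4*x^4 + c5*x^5) x := by
    intro x _
    have h1 : HasDerivAt (fun y : ℝ => c0*y) (c0*1) x := (hasDerivAt_id x).const_mul c0
    have h2 := ((hasDerivAt_pow 2 x).const_mul c1).div_const 2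
    have h3 := ((hasDerivAt_pow 3 x).const_mul c2).div_const 3
    have h4 := ((hasDerivAt_pow 4 x).const_mul c3).div_const 4
    have h5 := ((hasDerivAt_pow 5 x).const_mul c4).div_const 5
    have h6 := ((hasDerivAt_pow 6 x).const_mul c5).div_const 6
    have H := ((((h1.add h2).add h3).add h4).add h5).add h6
    refine H.congr_deriv ?_
    push_cast
    ring
  rw [intervalIntegral.integral_eq_sub_of_hasDerivAt h
    ((by fun_prop : Continuous fun x : ℝ => c0 + c1*x + c2*x^2 + c3*x^3 + c4*x^4 + c5*x^5).intervalIntegrable a b)]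

private lemma innerA (t s1 : ℝ) (h0 : 0 ≤ s1) (h1 : s1 ≤ t) (h2 : t ≤ 1) :
    (∫ s2 in (0:ℝ)..1,
      (min s1 t - s1 * t) * (min s2 t - s2 * t) *
        (min (min s1 s2) t + s1 * s2 * t - s2 * min s1 t - s1 * min s2 t))
      = (t/3 - 7*t^2/6 + 5*t^3/3 - 7*t^4/6 + t^5/3)*s1^2 - (1-t)^2/6*s1^4 := by
  have hG : Continuous (fun s2 : ℝ =>
      (min s1 t - s1 * t) * (min s2 t - s2 * t) *
        (min (min s1 s2) t + s1 * s2 * t - s2 * min s1 t - s1 * min s2 t)) := by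
    fun_prop
  rw [← intervalIntegral.integral_add_adjacent_intervals (a := (0:ℝ)) (b := s1) (c := 1)
      (hG.intervalIntegrable _ _) (hG.intervalIntegrable _ _),
    ← intervalIntegral.integral_add_adjacent_intervals (a := s1) (b := t) (c := 1)
      (hG.intervalIntegrable _ _) (hG.intervalIntegrable _ _)]
  have e1 : (∫ s2 in (0:ℝ)..s1,
      (min s1 t - s1 * t) * (min s2 t - s2 * t) *
        (min (min s1 s2) t + s1 * s2 * t - s2 * min s1 t - s1 * min s2 t))
      = ∫ x in (0:ℝ)..s1, ((0:ℝ) + 0*x + ((s1 - s1*t)*(1-t)*(1 + s1*t - 2*s1))*x^2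
          + 0*x^3 + 0*x^4 + 0*x^5) := by
    apply intervalIntegral.integral_congr
    intro x hx
    rw [Set.uIcc_of_le h0] at hx
    have hxt : x ≤ t := le_trans hx.2 h1
    dsimp only
    rw [min_eq_right hx.2, min_eq_left hxt, min_eq_left h1]
    ring
  have e2 : (∫ s2 in s1..t,
      (min s1 t - s1 * t) * (min s2 t - s2 * t) *
        (min (min s1 s2) t + s1 * s2 * t - s2 * min s1 t - s1 * min s2 t))
      = ∫ x in s1..t, ((0:ℝ) + (s1^2*(1-t)^2)*x + (s1^2*(1-t)^2*(t-2))*x^2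
          + 0*x^3 + 0*x^4 + 0*x^5) := by
    apply intervalIntegral.integral_congr
    intro x hx
    rw [Set.uIcc_of_le h1] at hx
    dsimp only
    rw [min_eq_left hx.1, min_eq_left h1, min_eq_left hx.2]
    ring
  have e3 : (∫ s2 in t..(1:ℝ),
      (min s1 t - s1 * t) * (min s2 t - s2 * t) *
        (min (min s1 s2) t + s1 * s2 * t - s2 * min s1 t - s1 * min s2 t))
      = ∫ x in t..(1:ℝ), ((s1^2*t*(1-t)^2) + (-2*s1^2*t*(1-t)^2)*x + (s1^2*t*(1-t)^2)*x^2
          + 0*x^3 + 0*x^4 + 0*x^5) := by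
    apply intervalIntegral.integral_congr
    intro x hx
    rw [Set.uIcc_of_le h2] at hx
    dsimp only
    rw [min_eq_left (le_trans h1 hx.1), min_eq_left h1, min_eq_right hx.1]
    ring
  rw [e1, e2, e3, integral_quintic, integral_quintic, integral_quintic]
  ring

private lemma innerB (t s1 : ℝ) (h0 : 0 ≤ t) (h1 : t ≤ s1) (h2 : s1 ≤ 1) :
    (∫ s2 in (0:ℝ)..1,
      (min s1 t - s1 * t) * (min s2 t - s2 * t) *
        (min (min s1 s2) t + s1 * s2 * t - s2 * min s1 t - s1 * min s2 t))
      = t^3*(1-t)^2*(1-s1)^2/3 := by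
  have hG : Continuous (fun s2 : ℝ =>
      (min s1 t - s1 * t) * (min s2 t - s2 * t) *
        (min (min s1 s2) t + s1 * s2 * t - s2 * min s1 t - s1 * min s2 t)) := by
    fun_prop
  rw [← intervalIntegral.integral_add_adjacent_intervals (a := (0:ℝ)) (b := t) (c := 1)
      (hG.intervalIntegrable _ _) (hG.intervalIntegrable _ _)]
  have e1 : (∫ s2 in (0:ℝ)..t,
      (min s1 t - s1 * t) * (min s2 t - s2 * t) *
        (min (min s1 s2) t + s1 * s2 * t - s2 * min s1 t - s1 * min s2 t))
      = ∫ x in (0:ℝ)..t, ((0:ℝ) + 0*x + (t*(1-s1)^2*(1-t)^2)*x^2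
          + 0*x^3 + 0*x^4 + 0*x^5) := by
    apply intervalIntegral.integral_congr
    intro x hx
    rw [Set.uIcc_of_le h0] at hx
    dsimp only
    rw [min_eq_right (le_trans hx.2 h1), min_eq_left hx.2, min_eq_right h1]
    ring
  have e2 : (∫ s2 in t..(1:ℝ),
      (min s1 t - s1 * t) * (min s2 t - s2 * t) *
        (min (min s1 s2) t + s1 * s2 * t - s2 * min s1 t - s1 * min s2 t))
      = ∫ x in t..(1:ℝ), ((t^3*(1-s1)^2) + (-2*t^3*(1-s1)^2)*x + (t^3*(1-s1)^2)*x^2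
          + 0*x^3 + 0*x^4 + 0*x^5) := by
    apply intervalIntegral.integral_congr
    intro x hx
    rw [Set.uIcc_of_le (le_trans h1 h2)] at hx
    dsimp only
    rw [min_eq_right (le_min h1 hx.1), min_eq_right hx.1, min_eq_right h1]
    ring
  rw [e1, e2, integral_quintic, integral_quintic]
  ring

/-- For every `t ∈ [0,1]`,
`∫₀¹∫₀¹ (min(s1,t) - s1 t)(min(s2,t) - s2 t)[min(s1,s2,t) + s1 s2 t - s2 min(s1,t)
  - s1 min(s2,t)] ds1 ds2 = t³(1-t)²(5 - 10t + 6t²)/45`. -/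
theorem double_integral_prechange_kernel (t : ℝ) (ht : t ∈ Set.Icc (0:ℝ) 1) :
    (∫ s1 in (0:ℝ)..1, ∫ s2 in (0:ℝ)..1,
      (min s1 t - s1 * t) * (min s2 t - s2 * t) *
        (min (min s1 s2) t + s1 * s2 * t - s2 * min s1 t - s1 * min s2 t))
      = t ^ 3 * (1 - t) ^ 2 * (5 - 10 * t + 6 * t ^ 2) / 45 := by
  obtain ⟨ht0, ht1⟩ := ht
  set F : ℝ → ℝ := fun s1 => ∫ s2 in (0:ℝ)..1,
      (min s1 t - s1 * t) * (min s2 t - s2 * t) *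
        (min (min s1 s2) t + s1 * s2 * t - s2 * min s1 t - s1 * min s2 t) with hF
  have hgA : Continuous (fun x : ℝ =>
      (0:ℝ) + 0*x + (t/3 - 7*t^2/6 + 5*t^3/3 - 7*t^4/6 + t^5/3)*x^2 + 0*x^3
        + (-(1-t)^2/6)*x^4 + 0*x^5) := by fun_prop
  have hgB : Continuous (fun x : ℝ =>
      (t^3*(1-t)^2/3) + (-2*t^3*(1-t)^2/3)*x + (t^3*(1-t)^2/3)*x^2 + 0*x^3
        + 0*x^4 + 0*x^5) := by fun_prop
  have hIA : IntervalIntegrable F MeasureTheory.volume 0 t := by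
    apply (hgA.intervalIntegrable 0 t).congr
    intro x hx
    rw [Set.uIoc_of_le ht0] at hx
    rw [hF]
    dsimp only
    rw [innerA t x (le_of_lt hx.1) hx.2 ht1]
    ring
  have hIB : IntervalIntegrable F MeasureTheory.volume t 1 := by
    apply (hgB.intervalIntegrable t 1).congr
    intro x hx
    rw [Set.uIoc_of_le ht1] at hx
    rw [hF]
    dsimp only
    rw [innerB t x ht0 (le_of_lt hx.1) hx.2]
    ring
  rw [show (∫ s1 in (0:ℝ)..1, F s1) = (∫ s1 in (0:ℝ)..t, F s1) + ∫ s1 in t..(1:ℝ), F s1 from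
    (intervalIntegral.integral_add_adjacent_intervals hIA hIB).symm]
  have eA : (∫ s1 in (0:ℝ)..t, F s1) = ∫ x in (0:ℝ)..t,
      ((0:ℝ) + 0*x + (t/3 - 7*t^2/6 + 5*t^3/3 - 7*t^4/6 + t^5/3)*x^2 + 0*x^3
        + (-(1-t)^2/6)*x^4 + 0*x^5) := by
    apply intervalIntegral.integral_congr
    intro x hx
    rw [Set.uIcc_of_le ht0] at hx
    rw [hF]
    dsimp only
    rw [innerA t x hx.1 hx.2 ht1]
    ring
  have eB : (∫ s1 in t..(1:ℝ), F s1) = ∫ x in t..(1:ℝ),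
      ((t^3*(1-t)^2/3) + (-2*t^3*(1-t)^2/3)*x + (t^3*(1-t)^2/3)*x^2 + 0*x^3
        + 0*x^4 + 0*x^5) := by
    apply intervalIntegral.integral_congr
    intro x hx
    rw [Set.uIcc_of_le ht1] at hx
    rw [hF]
    dsimp only
    rw [innerB t x ht0 hx.1 hx.2]
    ring
  rw [eA, eB, integral_quintic, integral_quintic]
  ring
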